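/- arXiv:1207.2713 — 2 statements merged into one kernel-verified Lean document; each statement's English description precedes it below -/
import Mathlib

section
/- For the recursive integrals X^{(n)} defined with a nonvanishing continuous function f on [a,b] and base point x₀ ∈ [a,b], the bound |X^{(n)}(x)| ≤ max(c₁, c₂)^n · |x - x₀|^n holds for all x ∈ [a,b] and n ≥ 0, where c₁ = sup_{[a,b]} |f|² and c₂ = sup_{[a,b]} |1/f|². -/
open Set Filter MeasureTheory intervalIntegral

/-- Recursive integrals `X^{(n)}` based at `x₀`. -/
noncomputable def Xrec (f : ℝ → ℂ) (x₀ : ℝ) : ℕ → ℝ → ℂ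
  | 0, _ => 1
  | n + 1, x => ((n : ℂ) + 1) * ∫ s in x₀..x, Xrec f x₀ n s * (f s ^ 2) ^ ((-1 : ℤ) ^ (n + 1))

/-- Recursive integrals `X̃^{(n)}` based at `x₀`. -/
noncomputable def Xtil (f : ℝ → ℂ) (x₀ : ℝ) : ℕ → ℝ → ℂ
  | 0, _ => 1
  | n + 1, x => ((n : ℂ) + 1) * ∫ s in x₀..x, Xtil f x₀ n s * (f s ^ 2) ^ ((-1 : ℤ) ^ n)

/-- The system of functions `φ_k`. -/
noncomputable def phi (f : ℝ → ℂ) (x₀ : ℝ) (k : ℕ) (x : ℝ) : ℂ :=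
  if Odd k then f x * Xrec f x₀ k x else f x * Xtil f x₀ k x

/-- The system of functions `ψ_k`. -/
noncomputable def psi (f : ℝ → ℂ) (x₀ : ℝ) (k : ℕ) (x : ℝ) : ℂ :=
  if Odd k then Xtil f x₀ k x / f x else Xrec f x₀ k x / f x

theorem Xrec_bound (a b : ℝ) (hab : a ≤ b) (f : ℝ → ℂ)
    (hf : ContinuousOn f (Icc a b)) (hfne : ∀ x ∈ Icc a b, f x ≠ 0)
    (x₀ : ℝ) (hx₀ : x₀ ∈ Icc a b) (c₁ c₂ : ℝ)
    (hc₁ : c₁ = sSup ((fun x => ‖f x‖ ^ 2) '' Icc a b))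
    (hc₂ : c₂ = sSup ((fun x => ‖1 / f x‖ ^ 2) '' Icc a b)) :
    ∀ n : ℕ, ∀ x ∈ Icc a b,
      ‖Xrec f x₀ n x‖ ≤ max c₁ c₂ ^ n * |x - x₀| ^ n := by
  set M := max c₁ c₂ with hM
  have huIcc : uIcc a b = Icc a b := uIcc_of_le hab
  -- bounds on the weights
  have hb1 : ∀ s ∈ Icc a b, ‖f s‖ ^ 2 ≤ c₁ := by
    intro s hs
    rw [hc₁]
    exact le_csSup ((isCompact_Icc.image_of_continuousOn ((hf.norm).pow 2)).bddAbove)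
      (mem_image_of_mem _ hs)
  have hb2 : ∀ s ∈ Icc a b, ‖1 / f s‖ ^ 2 ≤ c₂ := by
    intro s hs
    rw [hc₂]
    refine le_csSup ?_ (mem_image_of_mem _ hs)
    refine (isCompact_Icc.image_of_continuousOn ?_).bddAbove
    exact ((continuousOn_const.div hf hfne).norm).pow 2
  have hM0 : 0 ≤ M := le_trans (sq_nonneg _) (le_max_of_le_left (hb1 x₀ hx₀))
  have hMb : ∀ m : ℕ, ∀ s ∈ Icc a b,
      ‖(f s ^ 2) ^ ((-1 : ℤ) ^ m)‖ ≤ M := by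
    intro m s hs
    rcases Nat.even_or_odd m with hm | hm
    · rw [hm.neg_one_pow, zpow_one, norm_pow]
      exact le_max_of_le_left (hb1 s hs)
    · rw [hm.neg_one_pow, zpow_neg, zpow_one, norm_inv, norm_pow]
      refine le_max_of_le_right (le_trans (le_of_eq ?_) (hb2 s hs))
      rw [one_div, norm_inv, inv_pow]
  -- continuity of the weights
  have hcw : ∀ m : ℕ, ContinuousOn (fun s => (f s ^ 2) ^ ((-1 : ℤ) ^ m)) (Icc a b) := by
    intro m
    exact (hf.pow 2).zpow₀ _ fun x hx => Or.inl (pow_ne_zero 2 (hfne x hx))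
  -- main induction: bound together with continuity
  have key : ∀ n : ℕ, ContinuousOn (Xrec f x₀ n) (Icc a b) ∧
      ∀ x ∈ Icc a b, ‖Xrec f x₀ n x‖ ≤ M ^ n * |x - x₀| ^ n := by
    intro n
    induction n with
    | zero => exact ⟨continuousOn_const, fun x hx => by simp [Xrec]⟩
    | succ n ih =>
      obtain ⟨ihc, ihb⟩ := ih
      have hgc : ContinuousOn (fun s => Xrec f x₀ n s * (f s ^ 2) ^ ((-1 : ℤ) ^ (n + 1)))
          (Icc a b) := ihc.mul (hcw (n + 1))
      have hgint : IntervalIntegrable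
          (fun s => Xrec f x₀ n s * (f s ^ 2) ^ ((-1 : ℤ) ^ (n + 1))) volume a b :=
        (hgc.mono huIcc.subset).intervalIntegrable
      have hXc : ContinuousOn (Xrec f x₀ (n + 1)) (Icc a b) := by
        have := continuousOn_primitive_interval' hgint (huIcc ▸ hx₀)
        rw [huIcc] at this
        exact (continuousOn_const.mul this : ContinuousOn
          (fun x => ((n : ℂ) + 1) * ∫ s in x₀..x,
            Xrec f x₀ n s * (f s ^ 2) ^ ((-1 : ℤ) ^ (n + 1))) (Icc a b))
      refine ⟨hXc, fun x hx => ?_⟩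
      have hsub : Set.uIoc x₀ x ⊆ Icc a b :=
        (Set.uIoc_subset_uIcc ..).trans (uIcc_subset_Icc hx₀ hx)
      have hbd : ‖∫ s in x₀..x, Xrec f x₀ n s * (f s ^ 2) ^ ((-1 : ℤ) ^ (n + 1))‖ ≤
          |∫ s in x₀..x, M ^ (n + 1) * |s - x₀| ^ n| := by
        refine intervalIntegral.norm_integral_le_abs_of_norm_le ?_ ?_
        · refine (ae_restrict_mem measurableSet_uIoc).mono fun t ht => ?_
          have htm := hsub ht
          have h1 : ‖Xrec f x₀ n t * (f t ^ 2) ^ ((-1 : ℤ) ^ (n + 1))‖ =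
              ‖Xrec f x₀ n t‖ * ‖(f t ^ 2) ^ ((-1 : ℤ) ^ (n + 1))‖ := by
            exact norm_mul _ _
          rw [h1]
          calc ‖Xrec f x₀ n t‖ * ‖(f t ^ 2) ^ ((-1 : ℤ) ^ (n + 1))‖
              ≤ (M ^ n * |t - x₀| ^ n) * M :=
                mul_le_mul (ihb t htm) (hMb (n + 1) t htm) (by positivity) (by positivity)
            _ = M ^ (n + 1) * |t - x₀| ^ n := by ring
        · exact (Continuous.intervalIntegrable (by continuity) _ _)
      have hval : |∫ s in x₀..x, M ^ (n + 1) * |s - x₀| ^ n| =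
          M ^ (n + 1) * (|x - x₀| ^ (n + 1) / (n + 1)) := by
        rw [intervalIntegral.integral_const_mul, abs_mul, abs_of_nonneg (pow_nonneg hM0 _)]
        congr 1
        rw [intervalIntegral.intervalIntegral_eq_integral_uIoc, smul_eq_mul, abs_mul]
        have h2 : |if (x₀:ℝ) ≤ x then (1:ℝ) else -1| = 1 := by split <;> simp
        rw [h2, one_mul, abs_of_nonneg
          (setIntegral_nonneg measurableSet_uIoc fun t _ => by positivity),
          integral_pow_abs_sub_uIoc]
      have habs : ‖Xrec f x₀ (n + 1) x‖ =
          (n + 1 : ℝ) * ‖∫ s in x₀..x, Xrec f x₀ n s * (f s ^ 2) ^ ((-1 : ℤ) ^ (n + 1))‖ := by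
        show ‖((n : ℂ) + 1) * _‖ = _
        rw [norm_mul]
        congr 1
        rw [show ((n : ℂ) + 1) = ((n + 1 : ℕ) : ℂ) by push_cast; ring, Complex.norm_natCast]
        push_cast; ring
      rw [habs]
      calc (n + 1 : ℝ) * ‖∫ s in x₀..x, Xrec f x₀ n s * (f s ^ 2) ^ ((-1 : ℤ) ^ (n + 1))‖
          ≤ (n + 1 : ℝ) * (M ^ (n + 1) * (|x - x₀| ^ (n + 1) / (n + 1))) := by
            refine mul_le_mul_of_nonneg_left (hbd.trans (le_of_eq hval)) (by positivity)
        _ = M ^ (n + 1) * |x - x₀| ^ (n + 1) := by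
            field_simp
  intro n x hx
  exact (key n).2 x hx
end

section
/- Let q : [a,b] → ℂ be continuous and f ∈ C²[a,b] a nonvanishing solution of f'' = q f. Then the function u₁ = Σ_{k=0}^∞ (λ^k/(2k)!) φ_{2k} is a C² solution of u'' − q u = λ u on (a,b). -/
open Set Filter MeasureTheory intervalIntegral

open Topology

open scoped Interval

section aux
variable {a b : ℝ} {f : ℝ → ℂ} {x₀ : ℝ}

lemma w_contOn (hc : ContinuousOn f (Icc a b)) (h0 : ∀ x ∈ Icc a b, f x ≠ 0) (n : ℕ) :
    ContinuousOn (fun s => (f s ^ 2) ^ ((-1 : ℤ) ^ n)) (Icc a b) :=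
  (hc.pow 2).zpow₀ _ (fun x hx => Or.inl (pow_ne_zero 2 (h0 x hx)))

lemma w_norm_le {K : ℝ} (hK1 : ∀ s ∈ Icc a b, ‖f s ^ 2‖ ≤ K)
    (hK2 : ∀ s ∈ Icc a b, ‖(f s ^ 2)⁻¹‖ ≤ K) (n : ℕ) {s : ℝ} (hs : s ∈ Icc a b) :
    ‖(f s ^ 2) ^ ((-1 : ℤ) ^ n)‖ ≤ K := by
  rcases Nat.even_or_odd n with h | h
  · rw [h.neg_one_pow, zpow_one]; exact hK1 s hs
  · rw [h.neg_one_pow, zpow_neg_one]; exact hK2 s hs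

lemma xtil_contOn (hab : a ≤ b) (hx₀ : x₀ ∈ Icc a b) (hc : ContinuousOn f (Icc a b))
    (h0 : ∀ x ∈ Icc a b, f x ≠ 0) : ∀ n, ContinuousOn (Xtil f x₀ n) (Icc a b) := by
  intro n
  induction n with
  | zero => exact continuousOn_const
  | succ n ih =>
    have hint : ContinuousOn (fun s => Xtil f x₀ n s * (f s ^ 2) ^ ((-1 : ℤ) ^ n)) (Icc a b) :=
      ih.mul (w_contOn hc h0 n)
    rw [← uIcc_of_le hab] at hint
    have hx₀' : x₀ ∈ Set.uIcc a b := by rw [uIcc_of_le hab]; exact hx₀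
    have hii : IntervalIntegrable (fun s => Xtil f x₀ n s * (f s ^ 2) ^ ((-1 : ℤ) ^ n)) volume a b :=
      hint.intervalIntegrable
    have h2 := intervalIntegral.continuousOn_primitive_interval' hii hx₀'
    rw [uIcc_of_le hab] at h2
    have he : Xtil f x₀ (n + 1)
        = fun x => ((n : ℂ) + 1) * ∫ s in x₀..x, Xtil f x₀ n s * (f s ^ 2) ^ ((-1 : ℤ) ^ n) := rfl
    rw [he]
    exact continuousOn_const.mul h2

lemma xtil_hasDerivAt (hab : a ≤ b) (hx₀ : x₀ ∈ Icc a b) (hc : ContinuousOn f (Icc a b))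
    (h0 : ∀ x ∈ Icc a b, f x ≠ 0) (n : ℕ) {x : ℝ} (hx : x ∈ Ioo a b) :
    HasDerivAt (Xtil f x₀ (n + 1))
      (((n : ℂ) + 1) * (Xtil f x₀ n x * (f x ^ 2) ^ ((-1 : ℤ) ^ n))) x := by
  set g := fun s => Xtil f x₀ n s * (f s ^ 2) ^ ((-1 : ℤ) ^ n) with hg
  have hgc : ContinuousOn g (Icc a b) := (xtil_contOn hab hx₀ hc h0 n).mul (w_contOn hc h0 n)
  have hxI : x ∈ Icc a b := Ioo_subset_Icc_self hx
  have hsub : uIcc x₀ x ⊆ Icc a b := by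
    rw [← uIcc_of_le hab]
    exact uIcc_subset_uIcc (by rwa [uIcc_of_le hab]) (by rwa [uIcc_of_le hab])
  have hint : IntervalIntegrable g volume x₀ x := (hgc.mono hsub).intervalIntegrable
  have hmeas : StronglyMeasurableAtFilter g (𝓝 x) volume :=
    ContinuousOn.stronglyMeasurableAtFilter isOpen_Ioo (hgc.mono Ioo_subset_Icc_self) x hx
  have hcont : ContinuousAt g x := hgc.continuousAt (Icc_mem_nhds hx.1 hx.2)
  exact HasDerivAt.const_mul ((n : ℂ) + 1)
    (intervalIntegral.integral_hasDerivAt_right hint hmeas hcont)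

lemma xtil_norm_le (hab : a ≤ b) (hx₀ : x₀ ∈ Icc a b) (hc : ContinuousOn f (Icc a b))
    (h0 : ∀ x ∈ Icc a b, f x ≠ 0) {K : ℝ}
    (hK1 : ∀ s ∈ Icc a b, ‖f s ^ 2‖ ≤ K) (hK2 : ∀ s ∈ Icc a b, ‖(f s ^ 2)⁻¹‖ ≤ K) :
    ∀ n, ∀ x ∈ Icc a b, ‖Xtil f x₀ n x‖ ≤ K ^ n * |x - x₀| ^ n := by
  have hK0 : 0 ≤ K := le_trans (norm_nonneg _) (hK1 a (by constructor <;> simp [hab, le_refl]))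
  intro n
  induction n with
  | zero => intro x _; simp [Xtil]
  | succ n ih =>
    intro x hx
    set g := fun s => Xtil f x₀ n s * (f s ^ 2) ^ ((-1 : ℤ) ^ n) with hg
    have hsub : uIcc x₀ x ⊆ Icc a b := by
      rw [← uIcc_of_le hab]
      exact uIcc_subset_uIcc (by rwa [uIcc_of_le hab]) (by rwa [uIcc_of_le hab])
    have hgc : ContinuousOn g (Icc a b) := (xtil_contOn hab hx₀ hc h0 n).mul (w_contOn hc h0 n)
    have hint : IntervalIntegrable g volume x₀ x := ((hgc.mono hsub).intervalIntegrable)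
    have hptwise : ∀ s ∈ Ι x₀ x, ‖g s‖ ≤ K ^ n * |s - x₀| ^ n * K := by
      intro s hs
      have hsI : s ∈ Icc a b := hsub (Ioc_subset_Icc_self hs)
      rw [norm_mul]
      exact mul_le_mul (ih s hsI) (w_norm_le hK1 hK2 n hsI) (norm_nonneg _) (by positivity)
    have hIOng : IntegrableOn (fun s => ‖g s‖) (Ι x₀ x) volume := hint.norm.def'
    have hbc : Continuous (fun s : ℝ => K ^ n * |s - x₀| ^ n * K) := by fun_prop
    have hIOnb : IntegrableOn (fun s => K ^ n * |s - x₀| ^ n * K) (Ι x₀ x) volume :=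
      (hbc.intervalIntegrable x₀ x).def'
    have hmono := MeasureTheory.setIntegral_mono_on hIOng hIOnb measurableSet_uIoc hptwise
    have hval : ∫ s in Ι x₀ x, K ^ n * |s - x₀| ^ n * K
        = K ^ (n + 1) * (|x - x₀| ^ (n + 1) / (n + 1)) := by
      have : ∀ s : ℝ, K ^ n * |s - x₀| ^ n * K = (K ^ (n+1)) * |s - x₀| ^ n := by
        intro s; ring
      simp_rw [this]
      rw [MeasureTheory.integral_const_mul, integral_pow_abs_sub_uIoc]
    have hnorm : ‖Xtil f x₀ (n + 1) x‖ = ((n : ℝ) + 1) * ‖∫ s in x₀..x, g s‖ := by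
      have he : Xtil f x₀ (n + 1) x = ((n : ℂ) + 1) * ∫ s in x₀..x, g s := rfl
      rw [he, norm_mul]
      congr 1
      have : ((n : ℂ) + 1) = ((n + 1 : ℕ) : ℂ) := by push_cast; ring
      rw [this, Complex.norm_natCast]; push_cast; ring
    have hle : ‖∫ s in x₀..x, g s‖ ≤ K ^ (n + 1) * (|x - x₀| ^ (n + 1) / (n + 1)) := by
      calc ‖∫ s in x₀..x, g s‖ ≤ ∫ s in Ι x₀ x, ‖g s‖ :=
            intervalIntegral.norm_integral_le_integral_norm_uIoc
        _ ≤ ∫ s in Ι x₀ x, K ^ n * |s - x₀| ^ n * K := hmono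
        _ = _ := hval
    rw [hnorm]
    have hne : (n : ℝ) + 1 ≠ 0 := by positivity
    calc ((n : ℝ) + 1) * ‖∫ s in x₀..x, g s‖
        ≤ ((n : ℝ) + 1) * (K ^ (n + 1) * (|x - x₀| ^ (n + 1) / (n + 1))) := by
          exact mul_le_mul_of_nonneg_left hle (by positivity)
      _ = K ^ (n + 1) * |x - x₀| ^ (n + 1) := by field_simp

end aux

section aux2
variable {a b : ℝ} {q f : ℝ → ℂ} {x₀ : ℝ} {lam : ℂ}

lemma f_hasDerivAt (hf : ContDiffOn ℝ 2 f (Icc a b)) {x : ℝ} (hx : x ∈ Ioo a b) :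
    HasDerivAt f (deriv f x) x := by
  have h1 : DifferentiableOn ℝ f (Ioo a b) :=
    (hf.mono Ioo_subset_Icc_self).differentiableOn (by norm_num)
  exact (h1.differentiableAt (isOpen_Ioo.mem_nhds hx)).hasDerivAt

lemma derivf_hasDerivAt (hf : ContDiffOn ℝ 2 f (Icc a b))
    (hfeq : ∀ x ∈ Icc a b, deriv (deriv f) x = q x * f x) {x : ℝ} (hx : x ∈ Ioo a b) :
    HasDerivAt (deriv f) (q x * f x) x := by
  have h2 : ContDiffOn ℝ 2 f (Ioo a b) := hf.mono Ioo_subset_Icc_self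
  rw [show (2 : WithTop ℕ∞) = 1 + 1 by norm_num] at h2
  have h3 := (contDiffOn_succ_iff_deriv_of_isOpen isOpen_Ioo).mp h2
  have h4 : DifferentiableOn ℝ (deriv f) (Ioo a b) := h3.2.2.differentiableOn one_ne_zero
  have h5 := (h4.differentiableAt (isOpen_Ioo.mem_nhds hx)).hasDerivAt
  rwa [hfeq x (Ioo_subset_Icc_self hx)] at h5

end aux2

/-- term of the series -/
noncomputable def T0 (f : ℝ → ℂ) (x₀ : ℝ) (lam : ℂ) (k : ℕ) (x : ℝ) : ℂ :=
  lam ^ k / (Nat.factorial (2 * k) : ℂ) * (f x * Xtil f x₀ (2 * k) x)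

/-- first derivative of the term -/
noncomputable def T1 (f : ℝ → ℂ) (x₀ : ℝ) (lam : ℂ) (k : ℕ) (x : ℝ) : ℂ :=
  lam ^ k / (Nat.factorial (2 * k) : ℂ) *
    (deriv f x * Xtil f x₀ (2 * k) x
      + ((2 * k : ℕ) : ℂ) * (Xtil f x₀ (2 * k - 1) x * (f x)⁻¹))

/-- second derivative of the term -/
noncomputable def T2 (q f : ℝ → ℂ) (x₀ : ℝ) (lam : ℂ) (k : ℕ) (x : ℝ) : ℂ :=
  lam ^ k / (Nat.factorial (2 * k) : ℂ) *
    (q x * f x * Xtil f x₀ (2 * k) x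
      + ((2 * k : ℕ) : ℂ) * ((2 * k - 1 : ℕ) : ℂ) * (f x * Xtil f x₀ (2 * k - 2) x))

section aux3
variable {a b : ℝ} {q f : ℝ → ℂ} {x₀ : ℝ} {lam : ℂ}

lemma T0_hasDerivAt (hab : a ≤ b) (hx₀ : x₀ ∈ Icc a b) (hf : ContDiffOn ℝ 2 f (Icc a b))
    (h0 : ∀ x ∈ Icc a b, f x ≠ 0) (k : ℕ) {x : ℝ} (hx : x ∈ Ioo a b) :
    HasDerivAt (fun y => T0 f x₀ lam k y) (T1 f x₀ lam k x) x := by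
  have hc : ContinuousOn f (Icc a b) := hf.continuousOn
  have hxI : x ∈ Icc a b := Ioo_subset_Icc_self hx
  cases k with
  | zero =>
    have h := (f_hasDerivAt hf hx).const_mul (lam ^ 0 / (Nat.factorial (2 * 0) : ℂ))
    unfold T0 T1
    simp only [Nat.mul_zero, Nat.zero_sub, Nat.cast_zero, zero_mul, add_zero]
    simpa only [Xtil, mul_one] using h
  | succ k =>
    have hmul := (f_hasDerivAt hf hx).mul (xtil_hasDerivAt hab hx₀ hc h0 (2 * k + 1) hx)
    have hidx : 2 * (k + 1) = 2 * k + 1 + 1 := by ring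
    have hidx2 : 2 * (k + 1) - 1 = 2 * k + 1 := by omega
    unfold T0 T1
    simp only [hidx, hidx2]
    have hodd : Odd (2 * k + 1) := ⟨k, by ring⟩
    have hval : deriv f x * Xtil f x₀ (2 * k + 1 + 1) x
          + f x * (((2 * k + 1 : ℕ) : ℂ) + 1) * (Xtil f x₀ (2 * k + 1) x * (f x ^ 2) ^ ((-1 : ℤ) ^ (2 * k + 1)))
        = deriv f x * Xtil f x₀ (2 * k + 1 + 1) x
          + ((2 * (k + 1) : ℕ) : ℂ) * (Xtil f x₀ (2 * k + 1) x * (f x)⁻¹) := by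
      rw [hodd.neg_one_pow, zpow_neg_one]
      have hne : f x ≠ 0 := h0 x hxI
      field_simp
      push_cast
      ring
    exact HasDerivAt.const_mul _ (by
      refine hmul.congr_deriv ?_
      rw [hodd.neg_one_pow, zpow_neg_one]
      have hne : f x ≠ 0 := h0 x hxI
      push_cast
      field_simp)

end aux3

section aux4
variable {a b : ℝ} {q f : ℝ → ℂ} {x₀ : ℝ} {lam : ℂ}

lemma T1_hasDerivAt (hab : a ≤ b) (hx₀ : x₀ ∈ Icc a b) (hf : ContDiffOn ℝ 2 f (Icc a b))
    (hfeq : ∀ x ∈ Icc a b, deriv (deriv f) x = q x * f x)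
    (h0 : ∀ x ∈ Icc a b, f x ≠ 0) (k : ℕ) {x : ℝ} (hx : x ∈ Ioo a b) :
    HasDerivAt (fun y => T1 f x₀ lam k y) (T2 q f x₀ lam k x) x := by
  have hc : ContinuousOn f (Icc a b) := hf.continuousOn
  have hxI : x ∈ Icc a b := Ioo_subset_Icc_self hx
  have hne : f x ≠ 0 := h0 x hxI
  cases k with
  | zero =>
    have h := (derivf_hasDerivAt hf hfeq hx).const_mul (lam ^ 0 / (Nat.factorial (2 * 0) : ℂ))
    unfold T1 T2
    simp only [Nat.mul_zero, Nat.zero_sub, Nat.cast_zero, zero_mul, add_zero, mul_zero]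
    simpa only [Xtil, mul_one, Nat.mul_zero] using h
  | succ k =>
    have hidx : 2 * (k + 1) = 2 * k + 1 + 1 := by ring
    have hidx2 : 2 * (k + 1) - 1 = 2 * k + 1 := by omega
    have hidx3 : 2 * (k + 1) - 2 = 2 * k := by omega
    have hodd : Odd (2 * k + 1) := ⟨k, by ring⟩
    have heven : Even (2 * k) := ⟨k, by ring⟩
    have hA := (derivf_hasDerivAt hf hfeq hx).mul (xtil_hasDerivAt hab hx₀ hc h0 (2 * k + 1) hx)
    have hInv : HasDerivAt (fun y => (f y)⁻¹) (-(f x ^ 2)⁻¹ * deriv f x) x :=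
      (hasDerivAt_inv hne).comp x (f_hasDerivAt hf hx)
    have hB := ((xtil_hasDerivAt hab hx₀ hc h0 (2 * k) hx).mul hInv).const_mul
      ((2 * (k + 1) : ℕ) : ℂ)
    have hsum := (hA.add hB).const_mul (lam ^ (k + 1) / (Nat.factorial (2 * (k + 1)) : ℂ))
    rw [hidx] at hsum
    unfold T1 T2
    simp only [hidx, hidx2, hidx3]
    refine hsum.congr_deriv ?_
    rw [hodd.neg_one_pow, heven.neg_one_pow, zpow_neg_one, zpow_one]
    push_cast
    simp only [inv_eq_one_div]
    have hfac : ((2 * k + 1 + 1).factorial : ℂ) ≠ 0 :=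
      Nat.cast_ne_zero.mpr (Nat.factorial_ne_zero _)
    field_simp [hne, hfac]
    ring

end aux4

section aux5
variable {a b : ℝ} {q f : ℝ → ℂ} {x₀ : ℝ} {lam : ℂ}

lemma fact_chain {B : ℝ} (hB : 0 ≤ B) (lam : ℂ) (k : ℕ) :
    ‖lam‖ ^ k / ((2 * k).factorial : ℝ) * B ^ (2 * k)
      ≤ (‖lam‖ * B ^ 2) ^ k / (k.factorial : ℝ) := by
  have hkpos : (0 : ℝ) < (k.factorial : ℝ) := by exact_mod_cast Nat.factorial_pos k
  have hkle : (k.factorial : ℝ) ≤ ((2 * k).factorial : ℝ) := by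
    exact_mod_cast Nat.factorial_le (by omega)
  have h1 : ‖lam‖ ^ k / ((2 * k).factorial : ℝ) ≤ ‖lam‖ ^ k / (k.factorial : ℝ) :=
    div_le_div_of_nonneg_left (by positivity) hkpos hkle
  calc ‖lam‖ ^ k / ((2 * k).factorial : ℝ) * B ^ (2 * k)
      ≤ ‖lam‖ ^ k / (k.factorial : ℝ) * B ^ (2 * k) := by
        exact mul_le_mul_of_nonneg_right h1 (by positivity)
    _ = (‖lam‖ * B ^ 2) ^ k / (k.factorial : ℝ) := by
        rw [mul_pow, pow_mul]; ring

lemma coeff_norm (lam : ℂ) (k : ℕ) :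
    ‖lam ^ k / ((Nat.factorial (2 * k)) : ℂ)‖ = ‖lam‖ ^ k / ((2 * k).factorial : ℝ) := by
  rw [norm_div, norm_pow, Complex.norm_natCast]

lemma summable_u (K r : ℝ) (hr : 0 ≤ r) :
    Summable (fun k : ℕ => K ^ 2 * ((2 * (k : ℝ) + 1) ^ 2 * ((r ^ k) / (k.factorial : ℝ)))) := by
  apply Summable.mul_left
  apply Summable.of_nonneg_of_le (f := fun k : ℕ => (9 * r) ^ k / (k.factorial : ℝ))
    (fun k => by positivity) (fun k => ?_) (Real.summable_pow_div_factorial (9 * r))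
  have h1 : (2 * (k : ℝ) + 1) ^ 2 ≤ 9 ^ k := by
    induction k with
    | zero => norm_num
    | succ n ih =>
      have h9 : (1 : ℝ) ≤ 9 ^ n := one_le_pow₀ (by norm_num)
      push_cast at ih ⊢
      rw [pow_succ (9:ℝ) n]
      have hn : (0:ℝ) ≤ (n:ℝ) := Nat.cast_nonneg n
      nlinarith [ih, h9, hn, sq_nonneg (n:ℝ)]
  calc (2 * (k : ℝ) + 1) ^ 2 * (r ^ k / (k.factorial : ℝ))
      ≤ 9 ^ k * (r ^ k / (k.factorial : ℝ)) := by
        exact mul_le_mul_of_nonneg_right h1 (by positivity)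
    _ = (9 * r) ^ k / (k.factorial : ℝ) := by rw [mul_pow]; ring

variable {K B : ℝ}

lemma T0_bound (hK : 1 ≤ K) (hB : 1 ≤ B)
    (hfK : ∀ x ∈ Icc a b, ‖f x‖ ≤ K)
    (hXB : ∀ n, ∀ x ∈ Icc a b, ‖Xtil f x₀ n x‖ ≤ B ^ n)
    (k : ℕ) {x : ℝ} (hx : x ∈ Icc a b) :
    ‖T0 f x₀ lam k x‖
      ≤ K ^ 2 * ((2 * (k : ℝ) + 1) ^ 2 * ((‖lam‖ * B ^ 2) ^ k / (k.factorial : ℝ))) := by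
  have hB0 : (0 : ℝ) ≤ B := by linarith
  have hK0 : (0 : ℝ) ≤ K := by linarith
  have hrk : (0 : ℝ) ≤ (‖lam‖ * B ^ 2) ^ k / (k.factorial : ℝ) := by positivity
  have h21 : (1 : ℝ) ≤ (2 * (k : ℝ) + 1) ^ 2 := by
    have : (0:ℝ) ≤ (k : ℝ) := Nat.cast_nonneg k
    nlinarith
  calc ‖T0 f x₀ lam k x‖
      = ‖lam‖ ^ k / ((2 * k).factorial : ℝ) * ‖f x * Xtil f x₀ (2 * k) x‖ := by
        rw [T0, norm_mul, coeff_norm]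
    _ ≤ ‖lam‖ ^ k / ((2 * k).factorial : ℝ) * (K * B ^ (2 * k)) := by
        refine mul_le_mul_of_nonneg_left ?_ (by positivity)
        rw [norm_mul]
        exact mul_le_mul (hfK x hx) (hXB _ x hx) (norm_nonneg _) hK0
    _ = K * (‖lam‖ ^ k / ((2 * k).factorial : ℝ) * B ^ (2 * k)) := by ring
    _ ≤ K * ((‖lam‖ * B ^ 2) ^ k / (k.factorial : ℝ)) :=
        mul_le_mul_of_nonneg_left (fact_chain hB0 lam k) hK0
    _ ≤ K * ((2 * (k : ℝ) + 1) ^ 2 * ((‖lam‖ * B ^ 2) ^ k / (k.factorial : ℝ))) := by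
        refine mul_le_mul_of_nonneg_left ?_ hK0
        nlinarith [mul_le_mul_of_nonneg_right h21 hrk]
    _ ≤ K ^ 2 * ((2 * (k : ℝ) + 1) ^ 2 * ((‖lam‖ * B ^ 2) ^ k / (k.factorial : ℝ))) := by
        refine mul_le_mul_of_nonneg_right ?_ (by positivity)
        nlinarith [hK]

lemma T1_bound (hK : 1 ≤ K) (hB : 1 ≤ B)
    (hdK : ∀ x ∈ Ioo a b, ‖deriv f x‖ ≤ K)
    (hiK : ∀ x ∈ Icc a b, ‖(f x)⁻¹‖ ≤ K)
    (hXB : ∀ n, ∀ x ∈ Icc a b, ‖Xtil f x₀ n x‖ ≤ B ^ n)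
    (k : ℕ) {x : ℝ} (hx : x ∈ Ioo a b) :
    ‖T1 f x₀ lam k x‖
      ≤ K ^ 2 * ((2 * (k : ℝ) + 1) ^ 2 * ((‖lam‖ * B ^ 2) ^ k / (k.factorial : ℝ))) := by
  have hB0 : (0 : ℝ) ≤ B := by linarith
  have hK0 : (0 : ℝ) ≤ K := by linarith
  have hxI : x ∈ Icc a b := Ioo_subset_Icc_self hx
  have hrk : (0 : ℝ) ≤ (‖lam‖ * B ^ 2) ^ k / (k.factorial : ℝ) := by positivity
  have hkc : (0:ℝ) ≤ (k : ℝ) := Nat.cast_nonneg k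
  have hmain : ‖deriv f x * Xtil f x₀ (2 * k) x
      + ((2 * k : ℕ) : ℂ) * (Xtil f x₀ (2 * k - 1) x * (f x)⁻¹)‖
      ≤ (2 * (k : ℝ) + 1) * (K * B ^ (2 * k)) := by
    have h1 : ‖deriv f x * Xtil f x₀ (2 * k) x‖ ≤ K * B ^ (2 * k) := by
      rw [norm_mul]; exact mul_le_mul (hdK x hx) (hXB _ x hxI) (norm_nonneg _) hK0
    have h2 : ‖((2 * k : ℕ) : ℂ) * (Xtil f x₀ (2 * k - 1) x * (f x)⁻¹)‖
        ≤ 2 * (k : ℝ) * (K * B ^ (2 * k)) := by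
      rw [norm_mul, norm_mul, Complex.norm_natCast]
      have h3 : ‖Xtil f x₀ (2 * k - 1) x‖ * ‖(f x)⁻¹‖ ≤ B ^ (2 * k) * K := by
        refine mul_le_mul ?_ (hiK x hxI) (norm_nonneg _) (by positivity)
        exact le_trans (hXB _ x hxI) (pow_le_pow_right₀ hB (by omega))
      calc ((2 * k : ℕ) : ℝ) * (‖Xtil f x₀ (2 * k - 1) x‖ * ‖(f x)⁻¹‖)
          ≤ ((2 * k : ℕ) : ℝ) * (B ^ (2 * k) * K) := by
            exact mul_le_mul_of_nonneg_left h3 (by positivity)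
        _ = 2 * (k : ℝ) * (K * B ^ (2 * k)) := by push_cast; ring
    calc _ ≤ ‖deriv f x * Xtil f x₀ (2 * k) x‖
          + ‖((2 * k : ℕ) : ℂ) * (Xtil f x₀ (2 * k - 1) x * (f x)⁻¹)‖ := norm_add_le _ _
      _ ≤ K * B ^ (2 * k) + 2 * (k : ℝ) * (K * B ^ (2 * k)) := add_le_add h1 h2
      _ = (2 * (k : ℝ) + 1) * (K * B ^ (2 * k)) := by ring
  calc ‖T1 f x₀ lam k x‖
      = ‖lam‖ ^ k / ((2 * k).factorial : ℝ) * ‖deriv f x * Xtil f x₀ (2 * k) x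
          + ((2 * k : ℕ) : ℂ) * (Xtil f x₀ (2 * k - 1) x * (f x)⁻¹)‖ := by
        rw [T1, norm_mul, coeff_norm]
    _ ≤ ‖lam‖ ^ k / ((2 * k).factorial : ℝ) * ((2 * (k : ℝ) + 1) * (K * B ^ (2 * k))) :=
        mul_le_mul_of_nonneg_left hmain (by positivity)
    _ = (2 * (k : ℝ) + 1) * K * (‖lam‖ ^ k / ((2 * k).factorial : ℝ) * B ^ (2 * k)) := by ring
    _ ≤ (2 * (k : ℝ) + 1) * K * ((‖lam‖ * B ^ 2) ^ k / (k.factorial : ℝ)) :=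
        mul_le_mul_of_nonneg_left (fact_chain hB0 lam k) (by positivity)
    _ ≤ (2 * (k : ℝ) + 1) ^ 2 * K ^ 2 * ((‖lam‖ * B ^ 2) ^ k / (k.factorial : ℝ)) := by
        refine mul_le_mul_of_nonneg_right ?_ hrk
        nlinarith [hkc, hK, mul_nonneg hkc hK0]
    _ = K ^ 2 * ((2 * (k : ℝ) + 1) ^ 2 * ((‖lam‖ * B ^ 2) ^ k / (k.factorial : ℝ))) := by ring

lemma T2_bound (hK : 1 ≤ K) (hB : 1 ≤ B)
    (hqK : ∀ x ∈ Icc a b, ‖q x‖ ≤ K)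
    (hfK : ∀ x ∈ Icc a b, ‖f x‖ ≤ K)
    (hXB : ∀ n, ∀ x ∈ Icc a b, ‖Xtil f x₀ n x‖ ≤ B ^ n)
    (k : ℕ) {x : ℝ} (hx : x ∈ Icc a b) :
    ‖T2 q f x₀ lam k x‖
      ≤ K ^ 2 * ((2 * (k : ℝ) + 1) ^ 2 * ((‖lam‖ * B ^ 2) ^ k / (k.factorial : ℝ))) := by
  have hB0 : (0 : ℝ) ≤ B := by linarith
  have hK0 : (0 : ℝ) ≤ K := by linarith
  have hrk : (0 : ℝ) ≤ (‖lam‖ * B ^ 2) ^ k / (k.factorial : ℝ) := by positivity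
  have hkc : (0:ℝ) ≤ (k : ℝ) := Nat.cast_nonneg k
  have hmain : ‖q x * f x * Xtil f x₀ (2 * k) x
      + ((2 * k : ℕ) : ℂ) * ((2 * k - 1 : ℕ) : ℂ) * (f x * Xtil f x₀ (2 * k - 2) x)‖
      ≤ (2 * (k : ℝ) + 1) ^ 2 * (K ^ 2 * B ^ (2 * k)) := by
    have h1 : ‖q x * f x * Xtil f x₀ (2 * k) x‖ ≤ K ^ 2 * B ^ (2 * k) := by
      rw [norm_mul, norm_mul]
      calc ‖q x‖ * ‖f x‖ * ‖Xtil f x₀ (2 * k) x‖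
          ≤ K * K * B ^ (2 * k) := by
            refine mul_le_mul (mul_le_mul (hqK x hx) (hfK x hx) (norm_nonneg _) hK0)
              (hXB _ x hx) (norm_nonneg _) (by positivity)
        _ = K ^ 2 * B ^ (2 * k) := by ring
    have h2 : ‖((2 * k : ℕ) : ℂ) * ((2 * k - 1 : ℕ) : ℂ) * (f x * Xtil f x₀ (2 * k - 2) x)‖
        ≤ (2 * (k : ℝ)) * (2 * (k : ℝ)) * (K * B ^ (2 * k)) := by
      rw [norm_mul, norm_mul, norm_mul, Complex.norm_natCast, Complex.norm_natCast]
      have h3 : ‖f x‖ * ‖Xtil f x₀ (2 * k - 2) x‖ ≤ K * B ^ (2 * k) := by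
        refine mul_le_mul (hfK x hx) ?_ (norm_nonneg _) hK0
        exact le_trans (hXB _ x hx) (pow_le_pow_right₀ hB (by omega))
      have h4 : ((2 * k - 1 : ℕ) : ℝ) ≤ 2 * (k : ℝ) := by
        have := Nat.sub_le (2 * k) 1
        calc ((2 * k - 1 : ℕ) : ℝ) ≤ ((2 * k : ℕ) : ℝ) := by exact_mod_cast this
          _ = 2 * (k : ℝ) := by push_cast; ring
      have h5 : ((2 * k : ℕ) : ℝ) = 2 * (k : ℝ) := by push_cast; ring
      rw [h5]
      refine mul_le_mul (mul_le_mul le_rfl h4 (Nat.cast_nonneg _) (by positivity)) h3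
        (by positivity) (by positivity)
    calc _ ≤ ‖q x * f x * Xtil f x₀ (2 * k) x‖
          + ‖((2 * k : ℕ) : ℂ) * ((2 * k - 1 : ℕ) : ℂ) * (f x * Xtil f x₀ (2 * k - 2) x)‖ :=
          norm_add_le _ _
      _ ≤ K ^ 2 * B ^ (2 * k) + (2 * (k : ℝ)) * (2 * (k : ℝ)) * (K * B ^ (2 * k)) :=
          add_le_add h1 h2
      _ ≤ (2 * (k : ℝ) + 1) ^ 2 * (K ^ 2 * B ^ (2 * k)) := by
          have hKK : K ≤ K ^ 2 := by nlinarith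
          have ht : (0:ℝ) ≤ B ^ (2 * k) := pow_nonneg hB0 _
          have h4k : (0:ℝ) ≤ 4 * (k:ℝ) ^ 2 := by positivity
          nlinarith [mul_nonneg (mul_nonneg h4k (sub_nonneg.mpr hKK)) ht,
            mul_nonneg (mul_nonneg hkc (mul_nonneg hK0 hK0)) ht]
  calc ‖T2 q f x₀ lam k x‖
      = ‖lam‖ ^ k / ((2 * k).factorial : ℝ) * ‖q x * f x * Xtil f x₀ (2 * k) x
          + ((2 * k : ℕ) : ℂ) * ((2 * k - 1 : ℕ) : ℂ) * (f x * Xtil f x₀ (2 * k - 2) x)‖ := by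
        rw [T2, norm_mul, coeff_norm]
    _ ≤ ‖lam‖ ^ k / ((2 * k).factorial : ℝ) * ((2 * (k : ℝ) + 1) ^ 2 * (K ^ 2 * B ^ (2 * k))) :=
        mul_le_mul_of_nonneg_left hmain (by positivity)
    _ = (2 * (k : ℝ) + 1) ^ 2 * K ^ 2 * (‖lam‖ ^ k / ((2 * k).factorial : ℝ) * B ^ (2 * k)) := by
        ring
    _ ≤ (2 * (k : ℝ) + 1) ^ 2 * K ^ 2 * ((‖lam‖ * B ^ 2) ^ k / (k.factorial : ℝ)) :=
        mul_le_mul_of_nonneg_left (fact_chain hB0 lam k) (by positivity)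
    _ = K ^ 2 * ((2 * (k : ℝ) + 1) ^ 2 * ((‖lam‖ * B ^ 2) ^ k / (k.factorial : ℝ))) := by ring

end aux5

theorem spps_u1_solves (a b : ℝ) (hab : a < b) (q f : ℝ → ℂ)
    (hq : ContinuousOn q (Icc a b))
    (hf : ContDiffOn ℝ 2 f (Icc a b))
    (hfeq : ∀ x ∈ Icc a b, deriv (deriv f) x = q x * f x)
    (hfne : ∀ x ∈ Icc a b, f x ≠ 0)
    (x₀ : ℝ) (hx₀ : x₀ ∈ Icc a b) (lam : ℂ) :
    ContDiffOn ℝ 2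
        (fun x => ∑' k : ℕ, lam ^ k / (Nat.factorial (2 * k) : ℂ) * phi f x₀ (2 * k) x)
        (Ioo a b) ∧
    ∀ x ∈ Ioo a b,
      deriv (deriv (fun y => ∑' k : ℕ,
          lam ^ k / (Nat.factorial (2 * k) : ℂ) * phi f x₀ (2 * k) y)) x
        - q x * (∑' k : ℕ, lam ^ k / (Nat.factorial (2 * k) : ℂ) * phi f x₀ (2 * k) x)
        = lam * ∑' k : ℕ, lam ^ k / (Nat.factorial (2 * k) : ℂ) * phi f x₀ (2 * k) x := by
  have hab' : a ≤ b := le_of_lt hab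
  have hc : ContinuousOn f (Icc a b) := hf.continuousOn
  -- constants
  have hdw : ContinuousOn (derivWithin f (Icc a b)) (Icc a b) :=
    hf.continuousOn_derivWithin (uniqueDiffOn_Icc hab) (by norm_num)
  have h2c : ContinuousOn (fun x => f x ^ 2) (Icc a b) := hc.pow 2
  have hinv2c : ContinuousOn (fun x => (f x ^ 2)⁻¹) (Icc a b) :=
    h2c.inv₀ (fun x hx => pow_ne_zero 2 (hfne x hx))
  have hinvc : ContinuousOn (fun x => (f x)⁻¹) (Icc a b) := hc.inv₀ hfne
  obtain ⟨K1, hK1⟩ := isCompact_Icc.exists_bound_of_continuousOn hc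
  obtain ⟨K2, hK2⟩ := isCompact_Icc.exists_bound_of_continuousOn hdw
  obtain ⟨K3, hK3⟩ := isCompact_Icc.exists_bound_of_continuousOn hq
  obtain ⟨K4, hK4⟩ := isCompact_Icc.exists_bound_of_continuousOn hinvc
  obtain ⟨K5, hK5⟩ := isCompact_Icc.exists_bound_of_continuousOn h2c
  obtain ⟨K6, hK6⟩ := isCompact_Icc.exists_bound_of_continuousOn hinv2c
  set K : ℝ := 1 + |K1| + |K2| + |K3| + |K4| + |K5| + |K6| with hKdef
  have habs : 0 ≤ |K1| ∧ 0 ≤ |K2| ∧ 0 ≤ |K3| ∧ 0 ≤ |K4| ∧ 0 ≤ |K5| ∧ 0 ≤ |K6| :=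
    ⟨abs_nonneg _, abs_nonneg _, abs_nonneg _, abs_nonneg _, abs_nonneg _, abs_nonneg _⟩
  obtain ⟨a1, a2, a3, a4, a5, a6⟩ := habs
  have hKl : (1 : ℝ) ≤ K := by rw [hKdef]; linarith
  have hK0 : (0 : ℝ) ≤ K := by linarith
  have hfK : ∀ x ∈ Icc a b, ‖f x‖ ≤ K := fun x hx => by
    have := hK1 x hx; have := le_abs_self K1; rw [hKdef]; linarith
  have hdwK : ∀ x ∈ Icc a b, ‖derivWithin f (Icc a b) x‖ ≤ K := fun x hx => by
    have := hK2 x hx; have := le_abs_self K2; rw [hKdef]; linarith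
  have hqK : ∀ x ∈ Icc a b, ‖q x‖ ≤ K := fun x hx => by
    have := hK3 x hx; have := le_abs_self K3; rw [hKdef]; linarith
  have hiK : ∀ x ∈ Icc a b, ‖(f x)⁻¹‖ ≤ K := fun x hx => by
    have := hK4 x hx; have := le_abs_self K4; rw [hKdef]; linarith
  have h2K : ∀ x ∈ Icc a b, ‖f x ^ 2‖ ≤ K := fun x hx => by
    have := hK5 x hx; have := le_abs_self K5; rw [hKdef]; linarith
  have hi2K : ∀ x ∈ Icc a b, ‖(f x ^ 2)⁻¹‖ ≤ K := fun x hx => by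
    have := hK6 x hx; have := le_abs_self K6; rw [hKdef]; linarith
  have hdK : ∀ x ∈ Ioo a b, ‖deriv f x‖ ≤ K := fun x hx => by
    have heq : derivWithin f (Icc a b) x = deriv f x :=
      derivWithin_of_mem_nhds (Icc_mem_nhds hx.1 hx.2)
    rw [← heq]; exact hdwK x (Ioo_subset_Icc_self hx)
  -- bound for Xtil
  have hX := xtil_norm_le hab' hx₀ hc hfne h2K hi2K
  set B : ℝ := K * (b - a) + 1 with hBdef
  have hba : (0 : ℝ) ≤ b - a := by linarith
  have hKba : (0 : ℝ) ≤ K * (b - a) := mul_nonneg hK0 hba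
  have hB1 : (1 : ℝ) ≤ B := by rw [hBdef]; linarith
  have hB0 : (0 : ℝ) ≤ B := by linarith
  have hXB : ∀ n, ∀ x ∈ Icc a b, ‖Xtil f x₀ n x‖ ≤ B ^ n := by
    intro n x hx
    refine le_trans (hX n x hx) ?_
    have h1 : |x - x₀| ≤ b - a := by
      rw [abs_sub_le_iff]
      constructor <;> [linarith [hx.1, hx.2, hx₀.1, hx₀.2]; linarith [hx.1, hx.2, hx₀.1, hx₀.2] ]
    calc K ^ n * |x - x₀| ^ n = (K * |x - x₀|) ^ n := (mul_pow _ _ _).symm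
      _ ≤ B ^ n := by
          refine pow_le_pow_left₀ (by positivity) ?_ n
          have := mul_le_mul_of_nonneg_left h1 hK0
          rw [hBdef]; linarith
  -- summable majorant
  set r : ℝ := ‖lam‖ * B ^ 2 with hrdef
  have hr0 : (0 : ℝ) ≤ r := by rw [hrdef]; positivity
  set u : ℕ → ℝ := fun k => K ^ 2 * ((2 * (k : ℝ) + 1) ^ 2 * (r ^ k / (k.factorial : ℝ)))
    with hudef
  have hu : Summable u := summable_u K r hr0
  -- summability of the term series
  have hsumT0 : ∀ y ∈ Icc a b, Summable (fun k => T0 f x₀ lam k y) := fun y hy =>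
    Summable.of_norm_bounded hu (fun k => T0_bound hKl hB1 hfK hXB k hy)
  have hsumT1 : ∀ y ∈ Ioo a b, Summable (fun k => T1 f x₀ lam k y) := fun y hy =>
    Summable.of_norm_bounded hu (fun k => T1_bound hKl hB1 hdK hiK hXB k hy)
  have hsumT2 : ∀ y ∈ Ioo a b, Summable (fun k => T2 q f x₀ lam k y) := fun y hy =>
    Summable.of_norm_bounded hu
      (fun k => T2_bound hKl hB1 hqK hfK hXB k (Ioo_subset_Icc_self hy))
  -- midpoint
  set y₀ : ℝ := (a + b) / 2 with hy₀def
  have hy₀ : y₀ ∈ Ioo a b := ⟨by rw [hy₀def]; linarith, by rw [hy₀def]; linarith⟩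
  -- termwise differentiation
  have hU1 : ∀ x ∈ Ioo a b, HasDerivAt (fun y => ∑' k, T0 f x₀ lam k y)
      (∑' k, T1 f x₀ lam k x) x := by
    intro x hx
    exact hasDerivAt_tsum_of_isPreconnected hu isOpen_Ioo isPreconnected_Ioo
      (fun k y hy => T0_hasDerivAt hab' hx₀ hf hfne k hy)
      (fun k y hy => T1_bound hKl hB1 hdK hiK hXB k hy)
      hy₀ (hsumT0 y₀ (Ioo_subset_Icc_self hy₀)) hx
  have hU2 : ∀ x ∈ Ioo a b, HasDerivAt (fun y => ∑' k, T1 f x₀ lam k y)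
      (∑' k, T2 q f x₀ lam k x) x := by
    intro x hx
    exact hasDerivAt_tsum_of_isPreconnected hu isOpen_Ioo isPreconnected_Ioo
      (fun k y hy => T1_hasDerivAt hab' hx₀ hf hfeq hfne k hy)
      (fun k y hy => T2_bound hKl hB1 hqK hfK hXB k (Ioo_subset_Icc_self hy))
      hy₀ (hsumT1 y₀ hy₀) hx
  -- the statement's function equals the T0 series
  have hUx : ∀ y : ℝ, (∑' k : ℕ, lam ^ k / (Nat.factorial (2 * k) : ℂ) * phi f x₀ (2 * k) y)
      = ∑' k, T0 f x₀ lam k y := by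
    intro y
    refine tsum_congr (fun k => ?_)
    have hodd : ¬ Odd (2 * k) := by simp [Nat.odd_iff, Nat.mul_mod_right]
    rw [T0, phi, if_neg hodd]
  have hUeq : (fun x => ∑' k : ℕ, lam ^ k / (Nat.factorial (2 * k) : ℂ) * phi f x₀ (2 * k) x)
      = fun x => ∑' k, T0 f x₀ lam k x := funext hUx
  -- second derivative identity
  have hdU : Set.EqOn (deriv (fun y => ∑' k, T0 f x₀ lam k y))
      (fun y => ∑' k, T1 f x₀ lam k y) (Ioo a b) := fun x hx => (hU1 x hx).deriv
  have hdd : ∀ x ∈ Ioo a b, deriv (deriv (fun y => ∑' k, T0 f x₀ lam k y)) x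
      = ∑' k, T2 q f x₀ lam k x := by
    intro x hx
    have he : deriv (fun y => ∑' k, T0 f x₀ lam k y)
        =ᶠ[nhds x] (fun y => ∑' k, T1 f x₀ lam k y) :=
      Filter.eventuallyEq_of_mem (isOpen_Ioo.mem_nhds hx) hdU
    rw [Filter.EventuallyEq.deriv_eq he]
    exact (hU2 x hx).deriv
  -- ODE identity for the sums
  have hkey : ∀ x ∈ Ioo a b, (∑' k, T2 q f x₀ lam k x)
      = q x * (∑' k, T0 f x₀ lam k x) + lam * (∑' k, T0 f x₀ lam k x) := by
    intro x hx
    have hxI := Ioo_subset_Icc_self hx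
    set W : ℕ → ℂ := fun k => T2 q f x₀ lam k x - q x * T0 f x₀ lam k x with hWdef
    have hsumW : Summable W := (hsumT2 x hx).sub ((hsumT0 x hxI).mul_left (q x))
    have hsplit : ∀ k, T2 q f x₀ lam k x = q x * T0 f x₀ lam k x + W k := fun k => by
      rw [hWdef]; ring
    have hW0 : W 0 = 0 := by
      rw [hWdef]
      simp only [T2, T0, Nat.mul_zero, Nat.zero_sub, Nat.cast_zero, zero_mul, mul_zero, add_zero]
      ring
    have hWs : ∀ k, W (k + 1) = lam * T0 f x₀ lam k x := by
      intro k
      have hidx2 : 2 * (k + 1) - 1 = 2 * k + 1 := by omega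
      have hidx3 : 2 * (k + 1) - 2 = 2 * k := by omega
      have hidx : 2 * (k + 1) = 2 * k + 1 + 1 := by ring
      have hfac0 : ((2 * k).factorial : ℂ) ≠ 0 := Nat.cast_ne_zero.mpr (Nat.factorial_ne_zero _)
      have hne1 : ((2 * k + 1 + 1 : ℕ) : ℂ) ≠ 0 := Nat.cast_ne_zero.mpr (by omega)
      have hne2 : ((2 * k + 1 : ℕ) : ℂ) ≠ 0 := Nat.cast_ne_zero.mpr (by omega)
      rw [hWdef]
      show T2 q f x₀ lam (k + 1) x - q x * T0 f x₀ lam (k + 1) x = lam * T0 f x₀ lam k x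
      rw [T2, T0, T0, hidx2, hidx3, hidx, Nat.factorial_succ, Nat.factorial_succ,
        Nat.cast_mul, Nat.cast_mul]
      have hcoef : lam ^ (k + 1)
            / (((2 * k + 1 + 1 : ℕ) : ℂ) * (((2 * k + 1 : ℕ) : ℂ) * ((2 * k).factorial : ℂ)))
            * (((2 * k + 1 + 1 : ℕ) : ℂ) * ((2 * k + 1 : ℕ) : ℂ))
          = lam * (lam ^ k / ((2 * k).factorial : ℂ)) := by
        rw [div_mul_eq_mul_div, mul_div_assoc',
          div_eq_div_iff (mul_ne_zero hne1 (mul_ne_zero hne2 hfac0)) hfac0]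
        ring
      linear_combination (f x * Xtil f x₀ (2 * k) x) * hcoef
    calc (∑' k, T2 q f x₀ lam k x)
        = ∑' k, (q x * T0 f x₀ lam k x + W k) := tsum_congr hsplit
      _ = (∑' k, q x * T0 f x₀ lam k x) + ∑' k, W k :=
          Summable.tsum_add ((hsumT0 x hxI).mul_left _) hsumW
      _ = q x * (∑' k, T0 f x₀ lam k x) + ∑' k, W k := by rw [tsum_mul_left]
      _ = q x * (∑' k, T0 f x₀ lam k x) + lam * (∑' k, T0 f x₀ lam k x) := by
          congr 1
          rw [Summable.tsum_eq_zero_add hsumW, hW0, zero_add]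
          calc (∑' k, W (k + 1)) = ∑' k, lam * T0 f x₀ lam k x := tsum_congr hWs
            _ = lam * (∑' k, T0 f x₀ lam k x) := tsum_mul_left
  constructor
  · -- smoothness
    rw [hUeq]
    rw [show (2 : WithTop ℕ∞) = 1 + 1 by norm_num]
    refine (contDiffOn_succ_iff_deriv_of_isOpen isOpen_Ioo).mpr
      ⟨fun x hx => ((hU1 x hx).differentiableAt).differentiableWithinAt, by simp, ?_⟩
    refine ContDiffOn.congr ?_ hdU
    rw [show (1 : WithTop ℕ∞) = 0 + 1 by norm_num]
    refine (contDiffOn_succ_iff_deriv_of_isOpen isOpen_Ioo).mpr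
      ⟨fun x hx => ((hU2 x hx).differentiableAt).differentiableWithinAt, by simp, ?_⟩
    rw [contDiffOn_zero]
    have hUcont : ContinuousOn (fun x => ∑' k, T0 f x₀ lam k x) (Ioo a b) :=
      fun x hx => ((hU1 x hx).differentiableAt.continuousAt).continuousWithinAt
    have hVcont : ContinuousOn (fun x => q x * (∑' k, T0 f x₀ lam k x)
        + lam * (∑' k, T0 f x₀ lam k x)) (Ioo a b) :=
      ((hq.mono Ioo_subset_Icc_self).mul hUcont).add (hUcont.const_smul lam)
    refine ContinuousOn.congr hVcont ?_
    intro x hx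
    have : deriv (fun y => ∑' k, T1 f x₀ lam k y) x = ∑' k, T2 q f x₀ lam k x :=
      (hU2 x hx).deriv
    rw [this]
    exact hkey x hx
  · intro x hx
    rw [hUeq, hUx x, hdd x hx, hkey x hx]
    ring
end
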